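/- Regard p₀ as a smooth map from ℝ² ≅ ℂ to the 2×2 complex matrices (z = x + iy), and let ∂ₓp₀ and ∂_yp₀ denote its partial derivatives (the real Fréchet derivative applied to the directions 1 and i). Then for every z ∈ ℂ, the trace of p₀(z)·(∂ₓp₀(z)·∂_yp₀(z) − ∂_yp₀(z)·∂ₓp₀(z)) equals 2i/(1+|z|²)². (This is the Chern-form computation underlying the identity ch[p₀] = 1 + ω/(2π) for the tautological line bundle on S² ≅ ℙ¹(ℂ), ω being the Fubini–Study form.) -/

import Mathlib

open Complex Matrix

/-- The matrix `p₀(z) := (1+|z|²)⁻¹ · [[|z|², z], [conj z, 1]]`. -/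
noncomputable def p0 (z : ℂ) : Matrix (Fin 2) (Fin 2) ℂ :=
  ((1 + Complex.normSq z : ℝ) : ℂ)⁻¹ •
    !![((Complex.normSq z : ℝ) : ℂ), z; (starRingEnd ℂ) z, 1]

/-- `p₀` regarded as a map from `ℂ ≅ ℝ²` into `ℂ`-valued `2×2` arrays
(the space `Fin 2 → Fin 2 → ℂ`, which carries its product normed-space structure
over `ℝ`), so that real Fréchet derivatives can be taken. -/
noncomputable def p0fun (z : ℂ) : Fin 2 → Fin 2 → ℂ := fun i j => p0 z i j

/-- The partial derivative `∂ₓp₀(z)`: the real Fréchet derivative of `p₀` at `z`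
applied to the direction `1`. -/
noncomputable def dxP0 (z : ℂ) : Matrix (Fin 2) (Fin 2) ℂ :=
  Matrix.of (fderiv ℝ p0fun z 1)

/-- The partial derivative `∂_yp₀(z)`: the real Fréchet derivative of `p₀` at `z`
applied to the direction `i`. -/
noncomputable def dyP0 (z : ℂ) : Matrix (Fin 2) (Fin 2) ℂ :=
  Matrix.of (fderiv ℝ p0fun z Complex.I)

noncomputable def nsqD (z : ℂ) : ℂ →L[ℝ] ℝ :=
  (2 * z.re) • Complex.reCLM + (2 * z.im) • Complex.imCLM

lemma hasFDerivAt_normSq' (z : ℂ) : HasFDerivAt Complex.normSq (nsqD z) z := by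
  have h1 : HasFDerivAt (fun w : ℂ => w.re) Complex.reCLM z := Complex.reCLM.hasFDerivAt
  have h2 : HasFDerivAt (fun w : ℂ => w.im) Complex.imCLM z := Complex.imCLM.hasFDerivAt
  have h : HasFDerivAt (fun w : ℂ => w.re * w.re + w.im * w.im) _ z := (h1.mul h1).add (h2.mul h2)
  have he : (fun w : ℂ => w.re * w.re + w.im * w.im) = Complex.normSq := by
    funext w; simp [Complex.normSq_apply]
  rw [he] at h
  refine h.congr_fderiv ?_
  ext w
  simp [nsqD]
  ring

-- the complexified "norm" N and the directional derivative R
noncomputable def Nc (z : ℂ) : ℂ := ((1 + Complex.normSq z : ℝ) : ℂ)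
noncomputable def Rc (z v : ℂ) : ℂ := ((2 * z.re * v.re + 2 * z.im * v.im : ℝ) : ℂ)

lemma Nc_ne (z : ℂ) : Nc z ≠ 0 := by
  have h : (0:ℝ) < 1 + Complex.normSq z := by linarith [Complex.normSq_nonneg z]
  simp only [Nc, ne_eq, Complex.ofReal_eq_zero]
  exact ne_of_gt h

lemma fderiv_p0fun (z v : ℂ) :
    fderiv ℝ p0fun z v = fun i j =>
      !![Rc z v / (Nc z) ^ 2, v / Nc z - z * Rc z v / (Nc z) ^ 2;
         (starRingEnd ℂ) v / Nc z - (starRingEnd ℂ) z * Rc z v / (Nc z) ^ 2,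
         -(Rc z v / (Nc z) ^ 2)] i j := by
  have hne : Nc z ≠ 0 := Nc_ne z
  -- derivative of w ↦ ((1+normSq w : ℝ) : ℂ)
  have hN : HasFDerivAt (fun w : ℂ => ((1 + Complex.normSq w : ℝ) : ℂ))
      (Complex.ofRealCLM.comp (nsqD z)) z := by
    have := ((hasFDerivAt_normSq' z).const_add 1)
    exact Complex.ofRealCLM.hasFDerivAt.comp z this
  have hg := ((hasFDerivAt_inv hne).restrictScalars ℝ).comp z hN
  -- derivative of Q(w) = ((normSq w : ℝ) : ℂ)
  have hQ : HasFDerivAt (fun w : ℂ => ((Complex.normSq w : ℝ) : ℂ))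
      (Complex.ofRealCLM.comp (nsqD z)) z :=
    Complex.ofRealCLM.hasFDerivAt.comp z (hasFDerivAt_normSq' z)
  have hid : HasFDerivAt (fun w : ℂ => w) (ContinuousLinearMap.id ℝ ℂ) z := hasFDerivAt_id z
  have hconj : HasFDerivAt (fun w : ℂ => (starRingEnd ℂ) w)
      (Complex.conjCLE.toContinuousLinearMap) z := Complex.conjCLE.hasFDerivAt
  -- the four entries
  have e00 : (fun w => p0fun w 0 0) = fun w : ℂ =>
      ((1 + Complex.normSq w : ℝ) : ℂ)⁻¹ * ((Complex.normSq w : ℝ) : ℂ) := by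
    funext w; simp [p0fun, p0]
  have e01 : (fun w => p0fun w 0 1) = fun w : ℂ =>
      ((1 + Complex.normSq w : ℝ) : ℂ)⁻¹ * w := by
    funext w; simp [p0fun, p0]
  have e10 : (fun w => p0fun w 1 0) = fun w : ℂ =>
      ((1 + Complex.normSq w : ℝ) : ℂ)⁻¹ * (starRingEnd ℂ) w := by
    funext w; simp [p0fun, p0]
  have e11 : (fun w => p0fun w 1 1) = fun w : ℂ =>
      ((1 + Complex.normSq w : ℝ) : ℂ)⁻¹ := by
    funext w; simp [p0fun, p0]
  have h00 : HasFDerivAt (fun w => p0fun w 0 0) _ z :=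
    (hg.mul hQ).congr_of_eventuallyEq (by filter_upwards with w; simp [p0fun, p0, Nc, Function.comp])
  have h01 : HasFDerivAt (fun w => p0fun w 0 1) _ z :=
    (hg.mul hid).congr_of_eventuallyEq (by filter_upwards with w; simp [p0fun, p0, Nc, Function.comp])
  have h10 : HasFDerivAt (fun w => p0fun w 1 0) _ z :=
    (hg.mul hconj).congr_of_eventuallyEq (by filter_upwards with w; simp [p0fun, p0, Nc, Function.comp])
  have h11 : HasFDerivAt (fun w => p0fun w 1 1) _ z :=
    hg.congr_of_eventuallyEq (by filter_upwards with w; simp [p0fun, p0, Nc, Function.comp])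
  have hd : ∀ i j : Fin 2, DifferentiableAt ℝ (fun w => p0fun w i j) z := by
    intro i j
    fin_cases i <;> fin_cases j
    exacts [h00.differentiableAt, h01.differentiableAt, h10.differentiableAt,
      h11.differentiableAt]
  have key : ∀ i j : Fin 2, fderiv ℝ p0fun z v i j =
      fderiv ℝ (fun w => p0fun w i j) z v := by
    intro i j
    rw [fderiv_pi (fun i => differentiableAt_pi.2 (hd i))]
    rw [ContinuousLinearMap.pi_apply, fderiv_pi (hd i), ContinuousLinearMap.pi_apply]
  have hne' : (1 + ((Complex.normSq z : ℝ) : ℂ)) ≠ 0 := by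
    rw [show (1 + ((Complex.normSq z : ℝ) : ℂ)) = Nc z by simp [Nc]]; exact hne
  have v00 : fderiv ℝ (fun w => p0fun w 0 0) z v = Rc z v / Nc z ^ 2 := by
    rw [h00.fderiv]
    simp [nsqD, Nc, Rc, Function.comp]
    field_simp
    ring
  have v01 : fderiv ℝ (fun w => p0fun w 0 1) z v = v / Nc z - z * Rc z v / Nc z ^ 2 := by
    rw [h01.fderiv]
    simp [nsqD, Nc, Rc, Function.comp]
    field_simp
    ring
  have v10 : fderiv ℝ (fun w => p0fun w 1 0) z v =
      (starRingEnd ℂ) v / Nc z - (starRingEnd ℂ) z * Rc z v / Nc z ^ 2 := by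
    rw [h10.fderiv]
    simp [nsqD, Nc, Rc, Function.comp]
    field_simp
    ring
  have v11 : fderiv ℝ (fun w => p0fun w 1 1) z v = -(Rc z v / Nc z ^ 2) := by
    rw [h11.fderiv]
    simp [nsqD, Nc, Rc, Function.comp]
    field_simp
    ring
  funext i j
  rw [key i j]
  fin_cases i <;> fin_cases j
  · exact v00
  · exact v01
  · exact v10
  · exact v11


set_option maxHeartbeats 1000000 in
/-- For every `z ∈ ℂ`, `tr(p₀(z)·(∂ₓp₀(z)·∂_yp₀(z) − ∂_yp₀(z)·∂ₓp₀(z))) = 2i/(1+|z|²)²`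
(the Chern-form computation underlying `ch[p₀] = 1 + ω/(2π)` for the tautological
line bundle on `S² ≅ ℙ¹(ℂ)`, `ω` the Fubini–Study form). -/
theorem stmt5 (z : ℂ) :
    Matrix.trace (p0 z * (dxP0 z * dyP0 z - dyP0 z * dxP0 z)) =
      2 * Complex.I / ((1 + ((Complex.normSq z : ℝ) : ℂ)) ^ 2) := by
  have hne : Nc z ≠ 0 := Nc_ne z
  set x : ℂ := (z.re : ℂ) with hx
  set y : ℂ := (z.im : ℂ) with hy
  have hz : z = x + y * Complex.I := (Complex.re_add_im z).symm
  have hns : ((Complex.normSq z : ℝ) : ℂ) = x ^ 2 + y ^ 2 := by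
    rw [Complex.normSq_apply]; push_cast; ring
  have hN : Nc z = 1 + x ^ 2 + y ^ 2 := by
    rw [Nc, Complex.ofReal_add]; rw [hns]; push_cast; ring
  have hs0 : (1 : ℂ) + x ^ 2 + y ^ 2 ≠ 0 := hN ▸ hne
  have hR1 : Rc z 1 = 2 * x := by rw [Rc]; push_cast; simp [hx]
  have hRI : Rc z Complex.I = 2 * y := by rw [Rc]; push_cast; simp [hy]
  have hconj : (starRingEnd ℂ) z = x - y * Complex.I := by
    rw [Complex.ext_iff]; constructor <;> simp [hx, hy]
  set s : ℂ := 1 + x ^ 2 + y ^ 2 with hs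
  have hP : p0 z = s⁻¹ • !![x ^ 2 + y ^ 2, x + y * Complex.I; x - y * Complex.I, 1] := by
    rw [p0, ← hz, ← hconj, ← hns]
    congr 1
    rw [hN.symm, Nc, Complex.ofReal_add, Complex.ofReal_one]
  have hA : dxP0 z = (s ^ 2)⁻¹ •
      !![2 * x, s - 2 * x * (x + y * Complex.I);
         s - 2 * x * (x - y * Complex.I), -(2 * x)] := by
    ext i j
    rw [dxP0, Matrix.of_apply, fderiv_p0fun, hR1, hN, hconj, hz]
    fin_cases i <;> fin_cases j <;>
      simp only [Matrix.smul_apply, Matrix.of_apply, Fin.zero_eta, Fin.mk_one, Matrix.cons_val', Matrix.cons_val_zero,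
        Matrix.cons_val_one, Matrix.head_cons, Matrix.empty_val',
        Matrix.cons_val_fin_one, Matrix.head_fin_const, smul_eq_mul, _root_.map_one] <;>
      (field_simp; try ring)
  have hB : dyP0 z = (s ^ 2)⁻¹ •
      !![2 * y, Complex.I * s - 2 * y * (x + y * Complex.I);
         -(Complex.I * s) - 2 * y * (x - y * Complex.I), -(2 * y)] := by
    ext i j
    rw [dyP0, Matrix.of_apply, fderiv_p0fun, hRI, hN, hconj, hz]
    fin_cases i <;> fin_cases j <;>
      simp only [Matrix.smul_apply, Matrix.of_apply, Fin.zero_eta, Fin.mk_one, Matrix.cons_val', Matrix.cons_val_zero,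
        Matrix.cons_val_one, Matrix.head_cons, Matrix.empty_val',
        Matrix.cons_val_fin_one, Matrix.head_fin_const, smul_eq_mul, Complex.conj_I] <;>
      (field_simp; try ring)
  have hTr : Matrix.trace
      (!![x ^ 2 + y ^ 2, x + y * Complex.I; x - y * Complex.I, 1] *
        (!![2 * x, s - 2 * x * (x + y * Complex.I);
            s - 2 * x * (x - y * Complex.I), -(2 * x)] *
          !![2 * y, Complex.I * s - 2 * y * (x + y * Complex.I);
             -(Complex.I * s) - 2 * y * (x - y * Complex.I), -(2 * y)] -
         !![2 * y, Complex.I * s - 2 * y * (x + y * Complex.I);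
            -(Complex.I * s) - 2 * y * (x - y * Complex.I), -(2 * y)] *
          !![2 * x, s - 2 * x * (x + y * Complex.I);
             s - 2 * x * (x - y * Complex.I), -(2 * x)])) = 2 * Complex.I * s ^ 3 := by
    rw [Matrix.trace_fin_two]
    simp [Matrix.mul_apply, Matrix.sub_apply, Fin.sum_univ_two]
    rw [hs]
    ring
  rw [hP, hA, hB, hns]
  simp only [Matrix.smul_mul, Matrix.mul_smul, smul_smul, ← smul_sub, Matrix.trace_smul]
  rw [hTr, smul_eq_mul, show (1 : ℂ) + (x ^ 2 + y ^ 2) = s by rw [hs]; ring]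
  field_simp
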